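/- Let n be a natural number and let x, y_1, …, y_{n+1} be convex subsets of ℝⁿ such that the intersection ⋂_{i=1}^{n+1} y_i is nonempty. Then D_n^op(x, y_1, …, y_{n+1}) holds, i.e. convexHull(x ∪ ⋂_{i=1}^{n+1} y_i) = ⋂_{i=1}^{n+1} convexHull(x ∪ ⋂_{j≠i} y_j). -/

import Mathlib

open Set

/-- The set of points on rays from `p` away from points of `x` is convex. -/
lemma ray_set_convex {E : Type*} [AddCommGroup E] [Module ℝ E] {x : Set E}
    (hx : Convex ℝ x) (p : E) :
    Convex ℝ {q | ∃ s : ℝ, 0 ≤ s ∧ ∃ a ∈ x, q = p + s • (p - a)} := by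
  rintro q₁ ⟨s₁, hs₁, a₁, ha₁, rfl⟩ q₂ ⟨s₂, hs₂, a₂, ha₂, rfl⟩ l k hl hk hlk
  obtain rfl : k = 1 - l := by linarith
  have h1 : 0 ≤ l * s₁ := mul_nonneg hl hs₁
  have h2 : 0 ≤ (1 - l) * s₂ := mul_nonneg hk hs₂
  rcases eq_or_lt_of_le (show (0:ℝ) ≤ l * s₁ + (1 - l) * s₂ by linarith) with h0 | h0
  · have e1 : l * s₁ = 0 := by linarith
    have e2 : (1 - l) * s₂ = 0 := by linarith
    refine ⟨0, le_rfl, a₁, ha₁, ?_⟩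
    match_scalars <;> nlinarith [e1, e2]
  · set σ := l * s₁ + (1 - l) * s₂ with hσ
    have hσ0 : σ ≠ 0 := ne_of_gt h0
    refine ⟨σ, h0.le, (l * s₁ / σ) • a₁ + ((1 - l) * s₂ / σ) • a₂,
      hx ha₁ ha₂ (div_nonneg h1 h0.le) (div_nonneg h2 h0.le) (by field_simp; exact hσ.symm), ?_⟩
    match_scalars <;> field_simp <;> ring

/-- One side of the Radon partition argument. -/
lemma radon_side {n : ℕ} {y : Fin (n + 1) → Set (Fin n → ℝ)} (hy : ∀ i, Convex ℝ (y i))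
    {R : Set (Fin n → ℝ)} (hR : Convex ℝ R) {w : Fin n → ℝ} (hw : ∀ j, w ∈ y j)
    {b : Fin (n + 1) → Fin n → ℝ} (hbR : ∀ i, b i ∈ R) (hby : ∀ i j, j ≠ i → b i ∈ y j)
    {I : Set (Option (Fin (n + 1)))} (hI : none ∉ I) {m : Fin n → ℝ}
    (hm1 : m ∈ convexHull ℝ ((fun o => Option.elim o w b) '' I))
    (hm2 : m ∈ convexHull ℝ ((fun o => Option.elim o w b) '' Iᶜ)) :
    m ∈ R ∧ ∀ j, m ∈ y j := by
  constructor
  · refine convexHull_min ?_ hR hm1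
    rintro v ⟨o, ho, rfl⟩
    cases o with
    | none => exact absurd ho hI
    | some i => exact hbR i
  · intro j
    by_cases hj : some j ∈ I
    · refine convexHull_min ?_ (hy j) hm2
      rintro v ⟨o, ho, rfl⟩
      cases o with
      | none => exact hw j
      | some i => exact hby i j (fun h => ho (h ▸ hj))
    · refine convexHull_min ?_ (hy j) hm1
      rintro v ⟨o, ho, rfl⟩
      cases o with
      | none => exact absurd ho hI
      | some i => exact hby i j (fun h => hj (h ▸ ho))

/-- If `x, y₁, …, y_{n+1}` are convex subsets of `ℝⁿ` with `⋂ᵢ yᵢ` nonempty, then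
`D_n^op(x, y₁, …, y_{n+1})` holds. -/
theorem conv_Dn_op_of_inter_nonempty (n : ℕ) (x : Set (Fin n → ℝ))
    (y : Fin (n + 1) → Set (Fin n → ℝ))
    (hx : Convex ℝ x) (hy : ∀ i, Convex ℝ (y i))
    (hne : (⋂ i, y i).Nonempty) :
    convexHull ℝ (x ∪ ⋂ i, y i) =
      ⋂ i, convexHull ℝ (x ∪ ⋂ j, ⋂ (_ : j ≠ i), y j) := by
  obtain ⟨w, hw⟩ := hne
  have hwy : ∀ j, w ∈ y j := fun j => Set.mem_iInter.1 hw j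
  set z : Fin (n + 1) → Set (Fin n → ℝ) := fun i => ⋂ j, ⋂ (_ : j ≠ i), y j with hzdef
  have hz : ∀ i, Convex ℝ (z i) := fun i =>
    convex_iInter fun j => convex_iInter fun _ => hy j
  have hwz : ∀ i, w ∈ z i := fun i =>
    Set.mem_iInter.2 fun j => Set.mem_iInter.2 fun _ => hwy j
  apply Set.Subset.antisymm
  · refine Set.subset_iInter fun i => convexHull_mono (Set.union_subset_union_right _ ?_)
    intro v hv
    exact Set.mem_iInter.2 fun j => Set.mem_iInter.2 fun _ => Set.mem_iInter.1 hv j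
  intro p hp
  rw [Set.mem_iInter] at hp
  rcases Nat.eq_zero_or_pos n with rfl | hn
  · have : p = w := Subsingleton.elim p w
    exact this ▸ subset_convexHull ℝ _ (Set.mem_union_right _ hw)
  rcases x.eq_empty_or_nonempty with rfl | hxne
  · have hpz : ∀ i, p ∈ z i := fun i => by
      have h := hp i
      rwa [Set.empty_union, (hz i).convexHull_eq] at h
    refine subset_convexHull ℝ _ (Set.mem_union_right _ (Set.mem_iInter.2 fun j => ?_))
    rcases eq_or_ne j 0 with rfl | hj
    · have hne01 : (⟨1, by omega⟩ : Fin (n + 1)) ≠ 0 := by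
        intro h
        simpa using congrArg Fin.val h
      exact Set.mem_iInter.1 (Set.mem_iInter.1 (hpz ⟨1, by omega⟩) 0) hne01.symm
    · exact Set.mem_iInter.1 (Set.mem_iInter.1 (hpz 0) j) hj
  by_cases hpx : p ∈ x
  · exact subset_convexHull ℝ _ (Set.mem_union_left _ hpx)
  have hrep : ∀ i, ∃ b ∈ z i, ∃ s : ℝ, 0 ≤ s ∧ ∃ a ∈ x, b = p + s • (p - a) := by
    intro i
    have h := hp i
    rw [hx.convexHull_union (hz i) hxne ⟨w, hwz i⟩] at h
    obtain ⟨a, ha, b, hb, u, v, hu, hv, huv, hpab⟩ := mem_convexJoin.1 h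
    have hv0 : v ≠ 0 := by
      rintro rfl
      apply hpx
      have : a = p := by
        have hu1 : u = 1 := by linarith
        calc a = u • a + (0:ℝ) • b := by rw [hu1]; simp
        _ = p := hpab
      exact this ▸ ha
    have hbe : b = v⁻¹ • (p - u • a) := by
      rw [eq_inv_smul_iff₀ hv0]
      linear_combination (norm := module) hpab
    refine ⟨b, hb, u / v, div_nonneg hu (lt_of_le_of_ne hv (Ne.symm hv0)).le, a, ha, ?_⟩
    rw [hbe]
    match_scalars
    · field_simp
      linarith
    · field_simp
  choose b hbz s hs a hax hba using hrep
  set R : Set (Fin n → ℝ) := {q | ∃ s : ℝ, 0 ≤ s ∧ ∃ a ∈ x, q = p + s • (p - a)} with hRdef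
  have hR : Convex ℝ R := ray_set_convex hx p
  have hbR : ∀ i, b i ∈ R := fun i => ⟨s i, hs i, a i, hax i, hba i⟩
  have hby : ∀ i j, j ≠ i → b i ∈ y j := fun i j hji =>
    Set.mem_iInter.1 (Set.mem_iInter.1 (hbz i) j) hji
  have hdep : ¬ AffineIndependent ℝ (fun o : Option (Fin (n + 1)) => Option.elim o w b) := by
    intro h
    have h1 := h.card_le_finrank_succ
    have h2 : Module.finrank ℝ (vectorSpan ℝ
        (Set.range (fun o : Option (Fin (n + 1)) => Option.elim o w b))) ≤ n := by
      refine le_trans (Submodule.finrank_le _) ?_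
      simp [Module.finrank_fin_fun]
    simp only [Fintype.card_option, Fintype.card_fin] at h1
    omega
  obtain ⟨I, m, hmI, hmIc⟩ := Convex.radon_partition hdep
  have key : m ∈ R ∧ ∀ j, m ∈ y j := by
    by_cases hnone : none ∈ I
    · have hnone' : none ∉ Iᶜ := by simpa using hnone
      have hmI' : m ∈ convexHull ℝ ((fun o : Option (Fin (n + 1)) => Option.elim o w b) '' Iᶜᶜ) := by
        rwa [compl_compl]
      exact radon_side hy hR hwy hbR hby hnone' hmIc hmI'
    · exact radon_side hy hR hwy hbR hby hnone hmI hmIc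
  obtain ⟨⟨t, ht0, c, hcx, rfl⟩, hmy⟩ := key
  have ht1 : (0:ℝ) < 1 + t := by linarith
  have hseg : p ∈ segment ℝ c (p + t • (p - c)) := by
    refine ⟨t / (1 + t), 1 / (1 + t), div_nonneg ht0 ht1.le,
      div_nonneg zero_le_one ht1.le, by field_simp <;> ring, ?_⟩
    match_scalars <;> field_simp <;> try ring
  exact segment_subset_convexHull (Set.mem_union_left _ hcx)
    (Set.mem_union_right _ (Set.mem_iInter.2 hmy)) hseg
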